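/- Let A, A₀ be selfadjoint operators on a Hilbert space H such that the wave operators W_± = s-lim_{t→±∞} e^{itA} e^{-itA₀} exist, are isometric, and are complete (range = H_ac(A)), and suppose A, A₀ ≥ δ > 0. Define on H ⊕ H the operators 𝐇 = C diag(√A, -√A) C* and 𝐇₀ = C diag(√A₀, -√A₀) C*, where C = (1/√2)[[-i, i],[1,1]]. If the wave operators for (√A, √A₀) exist and equal W_±, then the wave operators W_±(𝐇, 𝐇₀) exist, are isometric and complete, and are given by the 2×2 block matrix (1/2)[[W_± + W_∓, i(W_∓ - W_±)],[i(W_± - W_∓), W_± + W_∓]]. -/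

import Mathlib

open Filter

section WaveEquation

variable {H : Type*} [NormedAddCommGroup H] [InnerProductSpace ℂ H] [CompleteSpace H]

/-- The unitary `2×2` matrix `C = (1/√2)[[-i, i],[1,1]]` acting on `H ⊕ H`. -/
noncomputable def Cmap (p : H × H) : H × H :=
  (((Real.sqrt 2)⁻¹ : ℂ) • (-(Complex.I • p.1) + Complex.I • p.2),
   ((Real.sqrt 2)⁻¹ : ℂ) • (p.1 + p.2))

/-- The adjoint matrix `C* = (1/√2)[[i, 1],[-i, 1]]` acting on `H ⊕ H`. -/
noncomputable def Cstar (p : H × H) : H × H :=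
  (((Real.sqrt 2)⁻¹ : ℂ) • (Complex.I • p.1 + p.2),
   ((Real.sqrt 2)⁻¹ : ℂ) • (-(Complex.I • p.1) + p.2))

/-- Given the unitary group `S t = e^{it√A}` of `√A`, the group
`e^{it𝐇} = C diag(e^{it√A}, e^{-it√A}) C*` of `𝐇 = C diag(√A, -√A) C*`. -/
noncomputable def waveGroup (S : ℝ → H →L[ℂ] H) (t : ℝ) (p : H × H) : H × H :=
  Cmap (S t (Cstar p).1, S (-t) (Cstar p).2)

/-- The block matrix `(1/2)[[Wa + Wb, i(Wb - Wa)],[i(Wa - Wb), Wa + Wb]]`. -/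
noncomputable def waveMatrix (Wa Wb : H →L[ℂ] H) (p : H × H) : H × H :=
  ((1 / 2 : ℂ) • ((Wa p.1 + Wb p.1) + Complex.I • (Wb p.2 - Wa p.2)),
   (1 / 2 : ℂ) • (Complex.I • (Wa p.1 - Wb p.1) + (Wa p.2 + Wb p.2)))

lemma hc2 : (((Real.sqrt 2 : ℝ) : ℂ))⁻¹ * (((Real.sqrt 2 : ℝ) : ℂ))⁻¹ = 1/2 := by
  rw [← mul_inv, ← Complex.ofReal_mul, Real.mul_self_sqrt (by norm_num)]
  norm_num

lemma hcsq : (((Real.sqrt 2 : ℝ) : ℂ))⁻¹ ^ 2 = 1/2 := by rw [sq]; exact hc2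

omit [CompleteSpace H] in
lemma waveMatrix_eq (Wa Wb : H →L[ℂ] H) (p : H × H) :
    waveMatrix Wa Wb p = Cmap (Wa (Cstar p).1, Wb (Cstar p).2) := by
  simp only [waveMatrix, Cmap, Cstar, map_add, map_smul, map_neg, smul_add, smul_neg,
    smul_smul, smul_sub]
  refine Prod.ext ?_ ?_ <;> match_scalars <;>
    · ring_nf
      try simp only [hcsq, Complex.I_sq]
      try ring_nf

omit [CompleteSpace H] in
lemma Cstar_Cmap (p : H × H) : Cstar (Cmap p) = p := by
  simp only [Cmap, Cstar, smul_add, smul_neg, smul_smul]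
  refine Prod.ext ?_ ?_ <;> match_scalars <;>
    · ring_nf
      try simp only [hcsq, Complex.I_sq]
      try ring_nf

omit [CompleteSpace H] in
lemma Cmap_Cstar (p : H × H) : Cmap (Cstar p) = p := by
  simp only [Cmap, Cstar, smul_add, smul_neg, smul_smul]
  refine Prod.ext ?_ ?_ <;> match_scalars <;>
    · ring_nf
      try simp only [hcsq, Complex.I_sq]
      try ring_nf

omit [CompleteSpace H] in
lemma Cmap_continuous : Continuous (Cmap : H × H → H × H) := by
  unfold Cmap; fun_prop

lemma hrsq : ((Real.sqrt 2 : ℝ))⁻¹ ^ 2 = 1/2 := by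
  rw [sq, ← mul_inv, Real.mul_self_sqrt (by norm_num)]
  norm_num

lemma hnormc : ‖(((Real.sqrt 2 : ℝ) : ℂ))⁻¹‖ = (Real.sqrt 2)⁻¹ := by
  rw [norm_inv, Complex.norm_real, Real.norm_eq_abs,
    abs_of_nonneg (Real.sqrt_nonneg 2)]

omit [CompleteSpace H] in
lemma norm_sq_Cmap (p : H × H) :
    ‖(Cmap p).1‖ ^ 2 + ‖(Cmap p).2‖ ^ 2 = ‖p.1‖ ^ 2 + ‖p.2‖ ^ 2 := by
  have h1 : -(Complex.I • p.1) + Complex.I • p.2 = Complex.I • (p.2 - p.1) := by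
    rw [smul_sub]; abel
  simp only [Cmap, h1, norm_smul, hnormc, Complex.norm_I, one_mul]
  rw [mul_pow, mul_pow, hrsq, norm_sub_rev]
  have par := parallelogram_law_with_norm ℂ p.1 p.2
  linarith

omit [CompleteSpace H] in
lemma norm_sq_Cstar (p : H × H) :
    ‖(Cstar p).1‖ ^ 2 + ‖(Cstar p).2‖ ^ 2 = ‖p.1‖ ^ 2 + ‖p.2‖ ^ 2 := by
  have h2 : -(Complex.I • p.1) + p.2 = -(Complex.I • p.1 - p.2) := by abel
  simp only [Cstar, h2, norm_neg, norm_smul, hnormc]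
  rw [mul_pow, mul_pow, hrsq]
  have par := parallelogram_law_with_norm ℂ (Complex.I • p.1) p.2
  simp only [← pow_two, norm_smul, Complex.norm_I, one_mul] at par
  linarith

omit [CompleteSpace H] in
lemma waveGroup_comp (S S₀ : ℝ → H →L[ℂ] H) (t : ℝ) (p : H × H) :
    waveGroup S t (waveGroup S₀ (-t) p) =
      Cmap (S t (S₀ (-t) (Cstar p).1), S (-t) (S₀ t (Cstar p).2)) := by
  simp only [waveGroup, Cstar_Cmap, neg_neg]

/-- **Wave operators for the Antonov wave equation.**
Let `A, A₀ ≥ δ > 0` be selfadjoint with unitary groups `S t = e^{it√A}` and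
`S₀ t = e^{it√A₀}` of their square roots.  Suppose the wave operators
`W_± = s-lim_{t→±∞} e^{it√A} e^{-it√A₀}` exist, are isometric and complete with
range the absolutely continuous subspace `Hac` of `A` (by the invariance
principle these coincide with the wave operators for `(A, A₀)`).  Define on
`H ⊕ H` the operators `𝐇 = C diag(√A,-√A) C*` and `𝐇₀ = C diag(√A₀,-√A₀) C*`,
where `C = (1/√2)[[-i,i],[1,1]]`, whose groups are `waveGroup S` and
`waveGroup S₀`.  Then the wave operators `W_±(𝐇,𝐇₀)` exist, are isometric and
complete, and are given by the block matrix
`(1/2)[[W_± + W_∓, i(W_∓ - W_±)],[i(W_± - W_∓), W_± + W_∓]]`. -/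
theorem wave_operators_antonov_wave_equation
    (S S₀ : ℝ → H →L[ℂ] H)
    (hS0 : S 0 = 1) (hSgrp : ∀ s t : ℝ, S (s + t) = S s ∘L S t)
    (hSiso : ∀ t : ℝ, ∀ f : H, ‖S t f‖ = ‖f‖)
    (hS₀0 : S₀ 0 = 1) (hS₀grp : ∀ s t : ℝ, S₀ (s + t) = S₀ s ∘L S₀ t)
    (hS₀iso : ∀ t : ℝ, ∀ f : H, ‖S₀ t f‖ = ‖f‖)
    (Wp Wm : H →L[ℂ] H)
    (hWp : ∀ f : H, Tendsto (fun t : ℝ => S t (S₀ (-t) f)) atTop (nhds (Wp f)))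
    (hWm : ∀ f : H, Tendsto (fun t : ℝ => S t (S₀ (-t) f)) atBot (nhds (Wm f)))
    (hWpIso : ∀ f : H, ‖Wp f‖ = ‖f‖) (hWmIso : ∀ f : H, ‖Wm f‖ = ‖f‖)
    (Hac : Submodule ℂ H) (hHacClosed : IsClosed (Hac : Set H))
    (hWpRange : Set.range Wp = (Hac : Set H))
    (hWmRange : Set.range Wm = (Hac : Set H)) :
    -- existence of `W_±(𝐇,𝐇₀)`, with the asserted block-matrix form
    (∀ p : H × H,
      Tendsto (fun t : ℝ => waveGroup S t (waveGroup S₀ (-t) p)) atTop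
        (nhds (waveMatrix Wp Wm p))) ∧
    (∀ p : H × H,
      Tendsto (fun t : ℝ => waveGroup S t (waveGroup S₀ (-t) p)) atBot
        (nhds (waveMatrix Wm Wp p))) ∧
    -- isometry of `W_±(𝐇,𝐇₀)` on `H ⊕ H`
    (∀ p : H × H,
      ‖(waveMatrix Wp Wm p).1‖ ^ 2 + ‖(waveMatrix Wp Wm p).2‖ ^ 2 =
        ‖p.1‖ ^ 2 + ‖p.2‖ ^ 2 ∧
      ‖(waveMatrix Wm Wp p).1‖ ^ 2 + ‖(waveMatrix Wm Wp p).2‖ ^ 2 =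
        ‖p.1‖ ^ 2 + ‖p.2‖ ^ 2) ∧
    -- completeness: the range is the absolutely continuous subspace
    -- `𝐇_ac(𝐇) = C (Hac ⊕ Hac)` of `𝐇`
    Set.range (waveMatrix Wp Wm) = Cmap '' ((Hac : Set H) ×ˢ (Hac : Set H)) ∧
    Set.range (waveMatrix Wm Wp) = Cmap '' ((Hac : Set H) ×ˢ (Hac : Set H)) := by
  have hflip : ∀ q : H, (fun t : ℝ => S (-t) (S₀ t q)) =
      (fun s : ℝ => S s (S₀ (-s) q)) ∘ (fun t : ℝ => -t) := by
    intro q; funext t; simp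
  -- existence, atTop
  have hTop : ∀ p : H × H,
      Tendsto (fun t : ℝ => waveGroup S t (waveGroup S₀ (-t) p)) atTop
        (nhds (waveMatrix Wp Wm p)) := by
    intro p
    simp only [waveGroup_comp, waveMatrix_eq]
    refine (Cmap_continuous.tendsto _).comp (Tendsto.prodMk_nhds (hWp _) ?_)
    rw [hflip]
    exact (hWm _).comp tendsto_neg_atTop_atBot
  have hBot : ∀ p : H × H,
      Tendsto (fun t : ℝ => waveGroup S t (waveGroup S₀ (-t) p)) atBot
        (nhds (waveMatrix Wm Wp p)) := by
    intro p
    simp only [waveGroup_comp, waveMatrix_eq]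
    refine (Cmap_continuous.tendsto _).comp (Tendsto.prodMk_nhds (hWm _) ?_)
    rw [hflip]
    exact (hWp _).comp tendsto_neg_atBot_atTop
  have hiso : ∀ (Wa Wb : H →L[ℂ] H), (∀ f : H, ‖Wa f‖ = ‖f‖) →
      (∀ f : H, ‖Wb f‖ = ‖f‖) → ∀ p : H × H,
      ‖(waveMatrix Wa Wb p).1‖ ^ 2 + ‖(waveMatrix Wa Wb p).2‖ ^ 2 =
        ‖p.1‖ ^ 2 + ‖p.2‖ ^ 2 := by
    intro Wa Wb ha hb p
    rw [waveMatrix_eq]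
    rw [norm_sq_Cmap]
    simp only [ha, hb]
    exact norm_sq_Cstar p
  have hrange : ∀ (Wa Wb : H →L[ℂ] H),
      Set.range Wa = (Hac : Set H) → Set.range Wb = (Hac : Set H) →
      Set.range (waveMatrix Wa Wb) = Cmap '' ((Hac : Set H) ×ˢ (Hac : Set H)) := by
    intro Wa Wb ha hb
    ext x
    constructor
    · rintro ⟨p, rfl⟩
      rw [waveMatrix_eq]
      exact ⟨(Wa (Cstar p).1, Wb (Cstar p).2),
        ⟨ha ▸ Set.mem_range_self _, hb ▸ Set.mem_range_self _⟩, rfl⟩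
    · rintro ⟨⟨a, b⟩, ⟨hamem, hbmem⟩, rfl⟩
      obtain ⟨f, rfl⟩ : a ∈ Set.range Wa := ha ▸ hamem
      obtain ⟨g, rfl⟩ : b ∈ Set.range Wb := hb ▸ hbmem
      refine ⟨Cmap (f, g), ?_⟩
      rw [waveMatrix_eq, Cstar_Cmap]
  exact ⟨hTop, hBot, fun p => ⟨hiso Wp Wm hWpIso hWmIso p, hiso Wm Wp hWmIso hWpIso p⟩,
    hrange Wp Wm hWpRange hWmRange, hrange Wm Wp hWmRange hWpRange⟩


end WaveEquation
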